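/- Let X₁,…,Xₙ, Y be Banach spaces, φ a bounded multilinear functional on X₁ × ⋯ × Xₙ, and y* ∈ Y*. Then the linear functional φ ⊗ y* on (X₁ ⊗ ⋯ ⊗ Xₙ ⊗ Y, γ), defined on elementary tensors by (φ ⊗ y*)(x¹ ⊗ ⋯ ⊗ xⁿ ⊗ y) = φ(x¹,…,xⁿ) · y*(y), is bounded with norm at most ‖φ‖ · ‖y*‖. -/

import Mathlib

open scoped NNReal

noncomputable section

universe u

variable (𝕜 : Type u) [RCLike 𝕜]

/-- A factorization of the bounded multilinear operator `T` through a Hilbert space: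
a Hilbert space `H`, a bounded multilinear operator `A` into `H`, and a Lipschitz map `B`
defined on the image of `A`, such that `T = B ∘ A`. -/
structure HilbertFactorization {n : ℕ} {X : Fin n → Type u} {Y : Type u}
    [∀ i, NormedAddCommGroup (X i)] [∀ i, NormedSpace 𝕜 (X i)]
    [NormedAddCommGroup Y] [NormedSpace 𝕜 Y]
    (T : ContinuousMultilinearMap 𝕜 X Y) where
  H : Type u
  [instNormed : NormedAddCommGroup H]
  [instInner : InnerProductSpace 𝕜 H]
  [instComplete : CompleteSpace H]
  A : ContinuousMultilinearMap 𝕜 X H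
  B : H → Y
  K : ℝ≥0
  lipschitz : LipschitzOnWith K B (Set.range fun x => A x)
  factors : ∀ x, T x = B (A x)

attribute [instance] HilbertFactorization.instNormed HilbertFactorization.instInner
  HilbertFactorization.instComplete

variable {𝕜}

/-- `T` factors through a Hilbert space. -/
def FactorsThroughHilbert {n : ℕ} {X : Fin n → Type u} {Y : Type u}
    [∀ i, NormedAddCommGroup (X i)] [∀ i, NormedSpace 𝕜 (X i)]
    [NormedAddCommGroup Y] [NormedSpace 𝕜 Y]
    (T : ContinuousMultilinearMap 𝕜 X Y) : Prop :=
  Nonempty (HilbertFactorization 𝕜 T)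

/-- The constant `Γ(T)`: the infimum of `‖A‖ · Lip(B)` over all factorizations of `T`
through a Hilbert space. -/
def gammaNorm {n : ℕ} {X : Fin n → Type u} {Y : Type u}
    [∀ i, NormedAddCommGroup (X i)] [∀ i, NormedSpace 𝕜 (X i)]
    [NormedAddCommGroup Y] [NormedSpace 𝕜 Y]
    (T : ContinuousMultilinearMap 𝕜 X Y) : ℝ :=
  sInf {c : ℝ | ∃ F : HilbertFactorization 𝕜 T, c = ‖F.A‖ * (F.K : ℝ)}

open scoped TensorProduct
open PiTensorProduct

variable (𝕜)

/-- The relation `≤_π` between finite families of (pairs of) decomposable tensors,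
parametrized by the generating tuples: `(pᵢ, qᵢ) ≤_π (aᵢ, bᵢ)` iff
`∑ᵢ |f_φ(pᵢ) − f_φ(qᵢ)|² ≤ ∑ᵢ |f_φ(aᵢ) − f_φ(bᵢ)|²` for every bounded multilinear
functional `φ` on `X₁ × ⋯ × Xₙ`. -/
def LePi {n m : ℕ} {X : Fin n → Type u}
    [∀ i, NormedAddCommGroup (X i)] [∀ i, NormedSpace 𝕜 (X i)]
    (p q a b : Fin m → ∀ i, X i) : Prop :=
  ∀ φ : ContinuousMultilinearMap 𝕜 X 𝕜,
    ∑ i, ‖φ (p i) - φ (q i)‖ ^ 2 ≤ ∑ i, ‖φ (a i) - φ (b i)‖ ^ 2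

/-- The tensor norm `γ` on `X₁ ⊗ ⋯ ⊗ Xₙ ⊗ Y`:
`γ(u) = inf (∑ᵢ π(aᵢ − bᵢ)²)^{1/2} (∑ᵢ ‖yᵢ‖²)^{1/2}`, the infimum over all representations
`u = ∑ᵢ (pᵢ − qᵢ) ⊗ yᵢ` with `pᵢ, qᵢ, aᵢ, bᵢ` decomposable and `(pᵢ, qᵢ) ≤_π (aᵢ, bᵢ)`. -/
def gammaTensor {n : ℕ} {X : Fin n → Type u} {Y : Type u}
    [∀ i, NormedAddCommGroup (X i)] [∀ i, NormedSpace 𝕜 (X i)]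
    [NormedAddCommGroup Y] [NormedSpace 𝕜 Y]
    (u : (⨂[𝕜] i, X i) ⊗[𝕜] Y) : ℝ :=
  sInf {r : ℝ | ∃ (m : ℕ) (p q a b : Fin m → ∀ i, X i) (y : Fin m → Y),
    (u = ∑ i, ((⨂ₜ[𝕜] j, p i j) - ⨂ₜ[𝕜] j, q i j) ⊗ₜ[𝕜] y i) ∧
    LePi 𝕜 p q a b ∧
    r = Real.sqrt (∑ i, projectiveSeminorm ((⨂ₜ[𝕜] j, a i j) - ⨂ₜ[𝕜] j, b i j) ^ 2) *
        Real.sqrt (∑ i, ‖y i‖ ^ 2)}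

variable {𝕜}


section AuxGamma

private lemma exists_rep_gamma {n : ℕ} (hn : 0 < n) {X : Fin n → Type u} {Y : Type u}
    [∀ i, NormedAddCommGroup (X i)] [∀ i, NormedSpace 𝕜 (X i)]
    [NormedAddCommGroup Y] [NormedSpace 𝕜 Y]
    (u : (⨂[𝕜] i, X i) ⊗[𝕜] Y) :
    ∃ (m : ℕ) (p q : Fin m → ∀ i, X i) (y : Fin m → Y),
      u = ∑ i, ((⨂ₜ[𝕜] j, p i j) - ⨂ₜ[𝕜] j, q i j) ⊗ₜ[𝕜] y i := by
  have hadd : ∀ u v : (⨂[𝕜] i, X i) ⊗[𝕜] Y,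
      (∃ (m : ℕ) (p q : Fin m → ∀ i, X i) (y : Fin m → Y),
        u = ∑ i, ((⨂ₜ[𝕜] j, p i j) - ⨂ₜ[𝕜] j, q i j) ⊗ₜ[𝕜] y i) →
      (∃ (m : ℕ) (p q : Fin m → ∀ i, X i) (y : Fin m → Y),
        v = ∑ i, ((⨂ₜ[𝕜] j, p i j) - ⨂ₜ[𝕜] j, q i j) ⊗ₜ[𝕜] y i) →
      (∃ (m : ℕ) (p q : Fin m → ∀ i, X i) (y : Fin m → Y),
        u + v = ∑ i, ((⨂ₜ[𝕜] j, p i j) - ⨂ₜ[𝕜] j, q i j) ⊗ₜ[𝕜] y i) := by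
    rintro u v ⟨m, p, q, y, rfl⟩ ⟨m', p', q', y', rfl⟩
    refine ⟨m + m', Fin.append p p', Fin.append q q', Fin.append y y', ?_⟩
    rw [Fin.sum_univ_add]
    simp [Fin.append_left, Fin.append_right]
  induction u using TensorProduct.induction_on with
  | zero => exact ⟨0, 0, 0, 0, by simp⟩
  | tmul x y =>
    induction x using PiTensorProduct.induction_on with
    | smul_tprod c f =>
      refine ⟨1, fun _ => Function.update f ⟨0, hn⟩ (c • f ⟨0, hn⟩), fun _ => 0,
        fun _ => y, ?_⟩
      have h1 : (⨂ₜ[𝕜] j, Function.update f ⟨0, hn⟩ (c • f ⟨0, hn⟩) j) = c • ⨂ₜ[𝕜] j, f j := by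
        have := (PiTensorProduct.tprod 𝕜).map_update_smul f ⟨0, hn⟩ c (f ⟨0, hn⟩)
        rwa [Function.update_eq_self] at this
      have h2 : (⨂ₜ[𝕜] (j : Fin n), (0 : X j)) = 0 :=
        (PiTensorProduct.tprod 𝕜).map_coord_zero (m := fun j => 0) ⟨0, hn⟩ rfl
      simp [h1, h2, sub_zero]
    | add x₁ x₂ h₁ h₂ => rw [TensorProduct.add_tmul]; exact hadd _ _ h₁ h₂
  | add u v h₁ h₂ => exact hadd _ _ h₁ h₂

private lemma key_gamma_bound {n : ℕ} {X : Fin n → Type u} {Y : Type u}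
    [∀ i, NormedAddCommGroup (X i)] [∀ i, NormedSpace 𝕜 (X i)]
    [NormedAddCommGroup Y] [NormedSpace 𝕜 Y]
    (φ : ContinuousMultilinearMap 𝕜 X 𝕜) (ψ : Y →L[𝕜] 𝕜)
    {m : ℕ} (p q a b : Fin m → ∀ i, X i) (y : Fin m → Y)
    (hle : LePi 𝕜 p q a b) :
    ‖TensorProduct.lift ((PiTensorProduct.lift φ.toMultilinearMap).smulRight
        (ψ : Y →ₗ[𝕜] 𝕜)) (∑ i, ((⨂ₜ[𝕜] j, p i j) - ⨂ₜ[𝕜] j, q i j) ⊗ₜ[𝕜] y i)‖ ≤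
      ‖φ‖ * ‖ψ‖ *
        (Real.sqrt (∑ i, projectiveSeminorm ((⨂ₜ[𝕜] j, a i j) - ⨂ₜ[𝕜] j, b i j) ^ 2) *
          Real.sqrt (∑ i, ‖y i‖ ^ 2)) := by
  set F := TensorProduct.lift ((PiTensorProduct.lift φ.toMultilinearMap).smulRight
      (ψ : Y →ₗ[𝕜] 𝕜)) with hFdef
  have hpt : ∀ (t : ⨂[𝕜] i, X i) (z : Y), F (t ⊗ₜ[𝕜] z) =
      PiTensorProduct.lift φ.toMultilinearMap t * ψ z := by
    intro t z
    simp [hFdef, TensorProduct.lift.tmul, LinearMap.smulRight_apply, smul_eq_mul]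
  have hFi : ∀ i, F ((((⨂ₜ[𝕜] j, p i j) - ⨂ₜ[𝕜] j, q i j)) ⊗ₜ[𝕜] y i) =
      (φ (p i) - φ (q i)) * ψ (y i) := by
    intro i
    rw [hpt, map_sub]
    simp [PiTensorProduct.lift.tprod]
  have hsum : F (∑ i, ((⨂ₜ[𝕜] j, p i j) - ⨂ₜ[𝕜] j, q i j) ⊗ₜ[𝕜] y i) =
      ∑ i, (φ (p i) - φ (q i)) * ψ (y i) := by
    rw [map_sum]; exact Finset.sum_congr rfl fun i _ => hFi i
  rw [hsum]
  calc ‖∑ i, (φ (p i) - φ (q i)) * ψ (y i)‖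
      ≤ ∑ i, ‖φ (p i) - φ (q i)‖ * ‖ψ (y i)‖ := by
        refine (norm_sum_le _ _).trans ?_
        refine Finset.sum_le_sum fun i _ => ?_
        rw [norm_mul]
    _ ≤ Real.sqrt (∑ i, ‖φ (p i) - φ (q i)‖ ^ 2) * Real.sqrt (∑ i, ‖ψ (y i)‖ ^ 2) :=
        Real.sum_mul_le_sqrt_mul_sqrt _ _ _
    _ ≤ (‖φ‖ * Real.sqrt (∑ i, projectiveSeminorm ((⨂ₜ[𝕜] j, a i j) - ⨂ₜ[𝕜] j, b i j) ^ 2)) *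
        (‖ψ‖ * Real.sqrt (∑ i, ‖y i‖ ^ 2)) := by
        have h1 : Real.sqrt (∑ i, ‖φ (p i) - φ (q i)‖ ^ 2) ≤
            ‖φ‖ * Real.sqrt (∑ i, projectiveSeminorm ((⨂ₜ[𝕜] j, a i j) - ⨂ₜ[𝕜] j, b i j) ^ 2) := by
          have step1 : ∑ i, ‖φ (a i) - φ (b i)‖ ^ 2 ≤
              ∑ i, (projectiveSeminorm ((⨂ₜ[𝕜] j, a i j) - ⨂ₜ[𝕜] j, b i j) * ‖φ‖) ^ 2 := by
            refine Finset.sum_le_sum fun i _ => ?_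
            have heq : φ (a i) - φ (b i) = PiTensorProduct.lift φ.toMultilinearMap
                ((⨂ₜ[𝕜] j, a i j) - ⨂ₜ[𝕜] j, b i j) := by
              rw [map_sub]; simp [PiTensorProduct.lift.tprod]
            rw [heq]
            have : ‖PiTensorProduct.lift φ.toMultilinearMap ((⨂ₜ[𝕜] j, a i j) - ⨂ₜ[𝕜] j, b i j)‖ ≤
                projectiveSeminorm ((⨂ₜ[𝕜] j, a i j) - ⨂ₜ[𝕜] j, b i j) * ‖φ‖ :=
              (norm_eval_le_projectiveSeminorm φ ((⨂ₜ[𝕜] j, a i j) - ⨂ₜ[𝕜] j, b i j)).trans_eq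
                (mul_comm _ _)
            exact pow_le_pow_left₀ (norm_nonneg _) this 2
          have := Real.sqrt_le_sqrt ((hle φ).trans step1)
          refine this.trans (le_of_eq ?_)
          simp_rw [mul_pow, ← Finset.sum_mul]
          rw [Real.sqrt_mul (by positivity), Real.sqrt_sq (norm_nonneg _), mul_comm]
        have h2 : Real.sqrt (∑ i, ‖ψ (y i)‖ ^ 2) ≤ ‖ψ‖ * Real.sqrt (∑ i, ‖y i‖ ^ 2) := by
          have step1 : ∑ i, ‖ψ (y i)‖ ^ 2 ≤ ∑ i, (‖ψ‖ * ‖y i‖) ^ 2 :=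
            Finset.sum_le_sum fun i _ => pow_le_pow_left₀ (norm_nonneg _) (ψ.le_opNorm _) 2
          refine (Real.sqrt_le_sqrt step1).trans (le_of_eq ?_)
          simp_rw [mul_pow, ← Finset.mul_sum]
          rw [Real.sqrt_mul (by positivity), Real.sqrt_sq (norm_nonneg _)]
        exact mul_le_mul h1 h2 (Real.sqrt_nonneg _) (by positivity)
    _ = ‖φ‖ * ‖ψ‖ *
        (Real.sqrt (∑ i, projectiveSeminorm ((⨂ₜ[𝕜] j, a i j) - ⨂ₜ[𝕜] j, b i j) ^ 2) *
          Real.sqrt (∑ i, ‖y i‖ ^ 2)) := by ring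

end AuxGamma

/-- For Banach spaces `X₁,…,Xₙ, Y`, a bounded multilinear functional `φ`
on `X₁ × ⋯ × Xₙ` and `y* ∈ Y*`, the linear functional `φ ⊗ y*` on `(X₁ ⊗ ⋯ ⊗ Xₙ ⊗ Y, γ)`,
given on elementary tensors by `(φ ⊗ y*)(x¹ ⊗ ⋯ ⊗ xⁿ ⊗ y) = φ(x¹,…,xⁿ) y*(y)`, is bounded
with norm at most `‖φ‖ ‖y*‖`. -/
theorem tensor_functional_gammaBounded {n : ℕ} (hn : 0 < n) {X : Fin n → Type u} {Y : Type u}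
    [∀ i, NormedAddCommGroup (X i)] [∀ i, NormedSpace 𝕜 (X i)] [∀ i, CompleteSpace (X i)]
    [NormedAddCommGroup Y] [NormedSpace 𝕜 Y] [CompleteSpace Y]
    (φ : ContinuousMultilinearMap 𝕜 X 𝕜) (ψ : Y →L[𝕜] 𝕜) :
    (∀ (x : ∀ i, X i) (y : Y),
      TensorProduct.lift ((PiTensorProduct.lift φ.toMultilinearMap).smulRight
          (ψ : Y →ₗ[𝕜] 𝕜)) ((⨂ₜ[𝕜] i, x i) ⊗ₜ[𝕜] y) = φ x * ψ y) ∧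
    (∀ u : (⨂[𝕜] i, X i) ⊗[𝕜] Y,
      ‖TensorProduct.lift ((PiTensorProduct.lift φ.toMultilinearMap).smulRight
          (ψ : Y →ₗ[𝕜] 𝕜)) u‖ ≤ ‖φ‖ * ‖ψ‖ * gammaTensor 𝕜 u) := by
  constructor
  · intro x y
    simp [TensorProduct.lift.tmul, LinearMap.smulRight_apply, smul_eq_mul,
      PiTensorProduct.lift.tprod]
  · intro u
    set C := ‖φ‖ * ‖ψ‖ with hC
    have hC0 : 0 ≤ C := by positivity
    set S : Set ℝ := {r : ℝ | ∃ (m : ℕ) (p q a b : Fin m → ∀ i, X i) (y : Fin m → Y),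
      (u = ∑ i, ((⨂ₜ[𝕜] j, p i j) - ⨂ₜ[𝕜] j, q i j) ⊗ₜ[𝕜] y i) ∧
      LePi 𝕜 p q a b ∧
      r = Real.sqrt (∑ i, projectiveSeminorm ((⨂ₜ[𝕜] j, a i j) - ⨂ₜ[𝕜] j, b i j) ^ 2) *
          Real.sqrt (∑ i, ‖y i‖ ^ 2)} with hSdef
    have hgamma : gammaTensor 𝕜 u = sInf S := rfl
    have hne : S.Nonempty := by
      obtain ⟨m, p, q, y, hu⟩ := exists_rep_gamma hn u
      exact ⟨_, m, p, q, p, q, y, hu, fun φ' => le_refl _, rfl⟩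
    have hbound : ∀ r ∈ S, ‖TensorProduct.lift
        ((PiTensorProduct.lift φ.toMultilinearMap).smulRight (ψ : Y →ₗ[𝕜] 𝕜)) u‖ ≤ C * r := by
      rintro r ⟨m, p, q, a, b, y, hu, hle, rfl⟩
      rw [hu]
      exact key_gamma_bound φ ψ p q a b y hle
    rw [hgamma, hC, ← smul_eq_mul, ← Real.sInf_smul_of_nonneg hC0]
    refine le_csInf (hne.smul_set) ?_
    rintro x ⟨r, hr, rfl⟩
    simpa using hbound r hr
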